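/- arXiv:2007.12965 — 4 statements merged into one kernel-verified Lean document; each statement's English description precedes it below -/
import Mathlib

section
/- If T ∈ GL(n, Z) is a quasi-unipotent matrix of infinite order, then for all but finitely many primes p, the order of the reduction of T modulo p in GL(n, F_p) is divisible by p. -/
/-- If `T ∈ GL(n, ℤ)` is quasi-unipotent (some positive power is unipotent) and of
infinite order, then for all but finitely many primes `p` the order of the reduction
of `T` modulo `p` in `GL(n, F_p)` is divisible by `p`. -/
theorem quasiUnipotent_order_mod_p_divisible (n : ℕ) (T : GL (Fin n) ℤ)
    (hqu : ∃ m : ℕ, 0 < m ∧ ((T : Matrix (Fin n) (Fin n) ℤ) ^ m - 1) ^ n = 0)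
    (hinf : ∀ k : ℕ, 0 < k → T ^ k ≠ 1) :
    {p : ℕ | p.Prime ∧
      ¬ p ∣ orderOf (Matrix.GeneralLinearGroup.map (Int.castRingHom (ZMod p)) T)}.Finite := by
  rcases Nat.eq_zero_or_pos n with rfl | hn
  · exact absurd (Subsingleton.elim (T ^ 1) 1) (hinf 1 one_pos)
  obtain ⟨m, hm, hnil⟩ := hqu
  set N : Matrix (Fin n) (Fin n) ℤ := (T : Matrix (Fin n) (Fin n) ℤ) ^ m - 1 with hNdef
  have hNne : N ≠ 0 := by
    intro h
    apply hinf m hm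
    have h1 : (T : Matrix (Fin n) (Fin n) ℤ) ^ m = 1 := by
      have := sub_eq_zero.mp h
      exact this
    ext : 1
    simpa [Units.val_pow_eq_pow_val] using h1
  obtain ⟨i, j, hij⟩ : ∃ i j, N i j ≠ 0 := by
    by_contra h
    push_neg at h
    exact hNne (by ext i j; simpa using h i j)
  have hsub : {p : ℕ | p.Prime ∧
      ¬ p ∣ orderOf (Matrix.GeneralLinearGroup.map (Int.castRingHom (ZMod p)) T)}
      ⊆ Set.Iic (N i j).natAbs := by
    rintro p ⟨hp, hdvd⟩
    haveI : Fact p.Prime := ⟨hp⟩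
    set x := Matrix.GeneralLinearGroup.map (Int.castRingHom (ZMod p)) T with hxdef
    -- the reduced matrix of T
    have hcoe : (x : Matrix (Fin n) (Fin n) (ZMod p)) =
        (T : Matrix (Fin n) (Fin n) ℤ).map (Int.castRingHom (ZMod p)) := rfl
    set M : Matrix (Fin n) (Fin n) (ZMod p) :=
      (x : Matrix (Fin n) (Fin n) (ZMod p)) ^ m with hMdef
    have hNmap : M - 1 = N.map (Int.castRingHom (ZMod p)) := by
      rw [hMdef, hcoe, hNdef]
      calc ((T : Matrix (Fin n) (Fin n) ℤ).map (Int.castRingHom (ZMod p))) ^ m - 1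
          = (Int.castRingHom (ZMod p)).mapMatrix ((T : Matrix (Fin n) (Fin n) ℤ) ^ m)
            - (Int.castRingHom (ZMod p)).mapMatrix 1 := by
            rw [map_pow, map_one, RingHom.mapMatrix_apply]
        _ = ((T : Matrix (Fin n) (Fin n) ℤ) ^ m - 1).map (Int.castRingHom (ZMod p)) := by
            rw [← map_sub, RingHom.mapMatrix_apply]
    have hMnil : (M - 1) ^ n = 0 := by
      rw [hNmap, ← RingHom.mapMatrix_apply, ← map_pow, hnil, map_zero]
    have hlt : n < p ^ n := Nat.lt_pow_self hp.one_lt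
    have hpow : (M - 1) ^ (p ^ n) = 0 := by
      have : p ^ n = n + (p ^ n - n) := by omega
      rw [this, pow_add, hMnil, zero_mul]
    have hMpow : M ^ (p ^ n) = 1 := by
      haveI : Nonempty (Fin n) := ⟨⟨0, hn⟩⟩
      have hc : Commute M (1 : Matrix (Fin n) (Fin n) (ZMod p)) := Commute.one_right M
      have := sub_pow_char_pow_of_commute (p := p) (n := n) hc
      rw [hpow] at this
      have h1 : M ^ p ^ n - 1 = 0 := by simpa using this.symm
      linear_combination (norm := abel) h1
    have hxm1 : x ^ m = 1 := by
      have hdvd1 : orderOf (x ^ m) ∣ p ^ n :=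
        orderOf_dvd_of_pow_eq_one (by
          have : ((x ^ m) ^ (p ^ n) : Matrix (Fin n) (Fin n) (ZMod p)) = 1 := by
            simpa [Units.val_pow_eq_pow_val] using hMpow
          ext : 1
          simpa [Units.val_pow_eq_pow_val] using this)
      have hdvd2 : orderOf (x ^ m) ∣ orderOf x := orderOf_pow_dvd m
      obtain ⟨s, hs, he⟩ := (Nat.dvd_prime_pow hp).mp hdvd1
      rcases Nat.eq_zero_or_pos s with rfl | hspos
      · simp only [pow_zero] at he
        exact orderOf_eq_one_iff.mp he
      · exfalso
        apply hdvd
        exact dvd_trans (dvd_trans (dvd_pow_self p hspos.ne') (he ▸ dvd_refl _)) hdvd2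
    -- from x ^ m = 1 deduce p ∣ N i j
    have hMap : N.map (Int.castRingHom (ZMod p)) = 0 := by
      have h1 : M = 1 := by
        simpa [hMdef, Units.val_pow_eq_pow_val] using congrArg Units.val hxm1
      rw [← hNmap, h1, sub_self]
    have hcast : ((N i j : ℤ) : ZMod p) = 0 := by
      have := congrFun (congrFun hMap i) j
      simpa using this
    have hdvdZ : (p : ℤ) ∣ N i j := (ZMod.intCast_zmod_eq_zero_iff_dvd _ _).mp hcast
    have hdvdN : p ∣ (N i j).natAbs := Int.natAbs_dvd_natAbs.mpr (by simpa using hdvdZ)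
    exact Nat.le_of_dvd (Int.natAbs_pos.mpr hij) hdvdN
  exact (Set.finite_Iic _).subset hsub
end

section
/- Let T ∈ GL(n, Z) be a matrix all of whose complex eigenvalues have absolute value 1. Then every eigenvalue of T is a root of unity. -/
/-- Kronecker's theorem: if all complex eigenvalues of `T ∈ GL(n, ℤ)` have absolute
value `1`, then every eigenvalue of `T` is a root of unity. -/
theorem eigenvalues_rootsOfUnity_of_abs_eq_one (n : ℕ) (T : GL (Fin n) ℤ)
    (habs : ∀ z : ℂ, (Matrix.charpoly
        (((T : Matrix (Fin n) (Fin n) ℤ)).map (Int.cast : ℤ → ℂ))).IsRoot z →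
      ‖z‖ = 1) :
    ∀ z : ℂ, (Matrix.charpoly
        (((T : Matrix (Fin n) (Fin n) ℤ)).map (Int.cast : ℤ → ℂ))).IsRoot z →
      ∃ k : ℕ, 0 < k ∧ z ^ k = 1 := by
  intro z hz
  set p : Polynomial ℤ := Matrix.charpoly (T : Matrix (Fin n) (Fin n) ℤ) with hp
  have hmap : Matrix.charpoly (((T : Matrix (Fin n) (Fin n) ℤ)).map (Int.cast : ℤ → ℂ))
      = p.map (Int.castRingHom ℂ) := by
    rw [hp, ← Matrix.charpoly_map]
    rfl
  have hzroot : (p.map (Int.castRingHom ℂ)).eval z = 0 := by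
    rw [← hmap]; exact hz
  -- `z` is an algebraic integer
  have hzi : IsIntegral ℤ z :=
    ⟨p, Matrix.charpoly_monic _, by
      rwa [Polynomial.eval₂_eq_eval_map]⟩
  have hzQ : IsIntegral ℚ z := hzi.tower_top
  -- the number field ℚ⟮z⟯
  let K := IntermediateField.adjoin ℚ ({z} : Set ℂ)
  haveI : FiniteDimensional ℚ K := IntermediateField.adjoin.finiteDimensional hzQ
  haveI : NumberField K := ⟨⟩
  let x : K := IntermediateField.AdjoinSimple.gen ℚ z
  have halg : algebraMap K ℂ x = z := IntermediateField.AdjoinSimple.algebraMap_gen ℚ z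
  have haux : ∀ φ : K →+* ℂ, (p.map (Int.castRingHom ℂ)).eval (φ x) = 0 := by
    intro φ
    have h0 : Polynomial.eval₂ (algebraMap ℤ K) x p = 0 := by
      apply (algebraMap K ℂ).injective
      rw [Polynomial.hom_eval₂, map_zero]
      have : (algebraMap K ℂ).comp (algebraMap ℤ K) = Int.castRingHom ℂ :=
        Subsingleton.elim _ _
      rw [this, halg, Polynomial.eval₂_eq_eval_map]
      exact hzroot
    have := congrArg φ h0
    rw [Polynomial.hom_eval₂, map_zero] at this
    have hcomp : φ.comp (algebraMap ℤ K) = Int.castRingHom ℂ := Subsingleton.elim _ _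
    rwa [hcomp, Polynomial.eval₂_eq_eval_map] at this
  have hxi : IsIntegral ℤ x := by
    refine ⟨p, Matrix.charpoly_monic _, ?_⟩
    apply (algebraMap K ℂ).injective
    rw [Polynomial.hom_eval₂, map_zero]
    have : (algebraMap K ℂ).comp (algebraMap ℤ K) = Int.castRingHom ℂ :=
      Subsingleton.elim _ _
    rw [this, halg, Polynomial.eval₂_eq_eval_map]
    exact hzroot
  have hnorm : ∀ φ : K →+* ℂ, ‖φ x‖ = 1 := by
    intro φ
    have := habs (φ x) (by rw [hmap]; exact haux φ)
    simpa using this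
  obtain ⟨k, hk, hxk⟩ :=
    NumberField.Embeddings.pow_eq_one_of_norm_eq_one K ℂ hxi hnorm
  refine ⟨k, hk, ?_⟩
  have := congrArg (algebraMap K ℂ) hxk
  rwa [map_pow, halg, map_one] at this
end

section
/- Let Γ be a finitely generated subgroup of GL(n, Z). If Γ is finite when reduced modulo every prime p (i.e., for every prime p the image of Γ in GL(n, F_p) has bounded cardinality independent of p), then Γ is finite. -/
/-- If `Γ` is a finitely generated subgroup of `GL(n, ℤ)` whose image in `GL(n, F_p)`
has cardinality bounded independently of the prime `p`, then `Γ` is finite. -/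
theorem finite_of_bounded_reduction_mod_primes (n : ℕ) (Γ : Subgroup (GL (Fin n) ℤ))
    (hfg : Γ.FG)
    (hbd : ∃ N : ℕ, ∀ p : ℕ, p.Prime →
      Nat.card (Γ.map (Matrix.GeneralLinearGroup.map (Int.castRingHom (ZMod p)))) ≤ N) :
    (Γ : Set (GL (Fin n) ℤ)).Finite := by
  classical
  obtain ⟨N, hN⟩ := hbd
  by_contra hinf
  rw [← Set.not_infinite, not_not] at hinf
  obtain ⟨t, hts, htcard⟩ := hinf.exists_subset_card_eq (N + 1)
  set M : ℕ := t.sup fun g => Finset.univ.sup fun ij : Fin n × Fin n =>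
    ((g : GL (Fin n) ℤ) ij.1 ij.2).natAbs with hMdef
  have hM : ∀ g ∈ t, ∀ i j, |((g : GL (Fin n) ℤ) i j)| ≤ (M : ℤ) := by
    intro g hg i j
    have h1 : ((g : GL (Fin n) ℤ) i j).natAbs ≤ M := by
      refine le_trans ?_ (Finset.le_sup hg)
      exact Finset.le_sup (f := fun ij : Fin n × Fin n =>
        ((g : GL (Fin n) ℤ) ij.1 ij.2).natAbs) (Finset.mem_univ (i, j))
    calc |((g : GL (Fin n) ℤ) i j)| = (((g : GL (Fin n) ℤ) i j).natAbs : ℤ) :=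
          (Int.abs_eq_natAbs _)
      _ ≤ (M : ℤ) := by exact_mod_cast h1
  obtain ⟨p, hpge, hp⟩ := Nat.exists_infinite_primes (2 * M + 2)
  haveI : Fact p.Prime := ⟨hp⟩
  set φ := Matrix.GeneralLinearGroup.map (n := Fin n) (Int.castRingHom (ZMod p)) with hφ
  have hinj : Set.InjOn (fun g => φ g) (t : Set (GL (Fin n) ℤ)) := by
    intro g hg h hh heq
    ext i j
    have hij : ((((g : GL (Fin n) ℤ)) i j : ℤ) : ZMod p)
        = (((h : GL (Fin n) ℤ) i j : ℤ) : ZMod p) := by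
      have := congrArg (fun x : GL (Fin n) (ZMod p) => x i j) heq
      simpa [φ, Matrix.GeneralLinearGroup.map_apply] using this
    have hdvd : (p : ℤ) ∣ ((g : GL (Fin n) ℤ) i j - (h : GL (Fin n) ℤ) i j) := by
      rwa [← ZMod.intCast_zmod_eq_zero_iff_dvd, Int.cast_sub, sub_eq_zero]
    have habs : |((g : GL (Fin n) ℤ) i j - (h : GL (Fin n) ℤ) i j)| < (p : ℤ) := by
      have h1 := hM g hg i j
      have h2 := hM h hh i j
      have : |((g : GL (Fin n) ℤ) i j - (h : GL (Fin n) ℤ) i j)| ≤ 2 * M := by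
        calc |((g : GL (Fin n) ℤ) i j - (h : GL (Fin n) ℤ) i j)|
            ≤ |((g : GL (Fin n) ℤ) i j)| + |((h : GL (Fin n) ℤ) i j)| := abs_sub _ _
          _ ≤ (M : ℤ) + M := add_le_add h1 h2
          _ = 2 * M := by ring
      have hplt : (2 * M : ℤ) < p := by exact_mod_cast Nat.lt_of_lt_of_le (by omega) hpge
      exact lt_of_le_of_lt this hplt
    have := Int.eq_zero_of_abs_lt_dvd hdvd habs
    have := sub_eq_zero.mp this
    exact this
  -- map t into the image subgroup
  have hsub : (fun g => φ g) '' (t : Set (GL (Fin n) ℤ)) ⊆ (Γ.map φ : Set (GL (Fin n) (ZMod p))) := by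
    rintro _ ⟨g, hg, rfl⟩
    exact ⟨g, hts hg, rfl⟩
  have hfin : Finite (GL (Fin n) (ZMod p)) := by infer_instance
  have hcard : N + 1 ≤ Nat.card (Γ.map φ) := by
    have h1 : ((t : Set (GL (Fin n) ℤ)).image (fun g => φ g)).ncard = N + 1 := by
      rw [Set.ncard_image_of_injOn hinj, Set.ncard_coe_finset, htcard]
    calc N + 1 = ((t : Set (GL (Fin n) ℤ)).image (fun g => φ g)).ncard := h1.symm
      _ ≤ (Γ.map φ : Set (GL (Fin n) (ZMod p))).ncard :=
          Set.ncard_le_ncard hsub (Set.toFinite _)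
      _ = Nat.card (Γ.map φ) := (Nat.card_coe_set_eq _).symm
  have hb := hN p hp
  rw [← hφ] at hb
  omega
end

section
/- Let T ∈ GL(n, Z) be of infinite order such that all complex eigenvalues of T have absolute value 1. Then for all but finitely many primes p, the order of T modulo p in GL(n, F_p) is divisible by p. -/
open Polynomial IntermediateField

/-- Kronecker: a root of a monic integer polynomial all of whose complex roots
have absolute value one is a root of unity. -/
lemma kronecker_aux (P : Polynomial ℤ) (hP : P.Monic)
    (habs : ∀ w : ℂ, (P.map (Int.castRingHom ℂ)).IsRoot w → ‖w‖ = 1)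
    (z : ℂ) (hz : (P.map (Int.castRingHom ℂ)).IsRoot z) :
    ∃ k : ℕ, 0 < k ∧ z ^ k = 1 := by
  have haev : ∀ w : ℂ, (Polynomial.aeval w) P = (P.map (Int.castRingHom ℂ)).eval w := by
    intro w
    rw [Polynomial.eval_map, Polynomial.aeval_def]
    rfl
  have hzi : IsIntegral ℤ z := ⟨P, hP, by rw [← Polynomial.aeval_def, haev]; exact hz⟩
  have hzq : IsIntegral ℚ z := hzi.tower_top
  haveI : FiniteDimensional ℚ ℚ⟮z⟯ := IntermediateField.adjoin.finiteDimensional hzq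
  haveI : NumberField ℚ⟮z⟯ := ⟨⟩
  set x : ℚ⟮z⟯ := IntermediateField.AdjoinSimple.gen ℚ z with hx
  have hgen : algebraMap ℚ⟮z⟯ ℂ x = z := IntermediateField.AdjoinSimple.algebraMap_gen ℚ z
  have hxi : IsIntegral ℤ x := by
    rw [← isIntegral_algebraMap_iff (algebraMap ℚ⟮z⟯ ℂ).injective, hgen]
    exact hzi
  have hmin : minpoly ℚ x = minpoly ℚ z := IntermediateField.minpoly_gen ℚ z
  have hdvd : minpoly ℚ z ∣ P.map (algebraMap ℤ ℚ) := by
    apply minpoly.dvd ℚ z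
    rw [Polynomial.aeval_map_algebraMap, haev]
    exact hz
  have hnorm : ∀ φ : ℚ⟮z⟯ →+* ℂ, ‖φ x‖ = 1 := by
    intro φ
    have hmem : φ x ∈ (minpoly ℚ x).rootSet ℂ := by
      haveI : Algebra.IsAlgebraic ℚ ℚ⟮z⟯ := Algebra.IsAlgebraic.of_finite ℚ _
      have hre := (Algebra.IsAlgebraic.range_eval_eq_rootSet_minpoly (F := ℚ) (K := ℚ⟮z⟯) ℂ x)
      rw [← hre]
      exact ⟨φ.toRatAlgHom, rfl⟩
    rw [Polynomial.mem_rootSet] at hmem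
    have hroot : (Polynomial.aeval (φ x)) (minpoly ℚ z) = 0 := by
      rw [← hmin]; exact hmem.2
    obtain ⟨q, hq⟩ := hdvd
    have h0 : (Polynomial.aeval (φ x)) (P.map (algebraMap ℤ ℚ)) = 0 := by
      rw [hq, map_mul, hroot, zero_mul]
    rw [Polynomial.aeval_map_algebraMap] at h0
    have hroot' : (P.map (Int.castRingHom ℂ)).IsRoot (φ x) := by
      rw [Polynomial.IsRoot, ← haev]; exact h0
    exact habs _ hroot'
  obtain ⟨k, hk, hxk⟩ := NumberField.Embeddings.pow_eq_one_of_norm_eq_one ℚ⟮z⟯ ℂ hxi hnorm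
  refine ⟨k, hk, ?_⟩
  have := congrArg (algebraMap ℚ⟮z⟯ ℂ) hxk
  rwa [map_pow, hgen, map_one] at this

/-- If `T ∈ GL(n, ℤ)` has infinite order and all its complex eigenvalues have absolute
value `1`, then for all but finitely many primes `p` the order of the reduction of `T`
modulo `p` in `GL(n, F_p)` is divisible by `p`. -/
theorem order_mod_p_divisible_of_eigenvalues_abs_one (n : ℕ) (T : GL (Fin n) ℤ)
    (hinf : ∀ k : ℕ, 0 < k → T ^ k ≠ 1)
    (habs : ∀ z : ℂ, (Matrix.charpoly
        (((T : Matrix (Fin n) (Fin n) ℤ)).map (Int.cast : ℤ → ℂ))).IsRoot z →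
      ‖z‖ = 1) :
    {p : ℕ | p.Prime ∧
      ¬ p ∣ orderOf (Matrix.GeneralLinearGroup.map (Int.castRingHom (ZMod p)) T)}.Finite := by
  classical
  set A : Matrix (Fin n) (Fin n) ℤ := (T : Matrix (Fin n) (Fin n) ℤ) with hA
  set P : Polynomial ℤ := A.charpoly with hP
  have hPm : P.Monic := A.charpoly_monic
  have hcmap : (A.map (Int.cast : ℤ → ℂ)).charpoly = P.map (Int.castRingHom ℂ) :=
    Matrix.charpoly_map A (Int.castRingHom ℂ)
  have habs' : ∀ w : ℂ, (P.map (Int.castRingHom ℂ)).IsRoot w → ‖w‖ = 1 := by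
    intro w hw; exact habs w (by rwa [hcmap])
  -- every root of the complex charpoly is a root of unity; find a uniform exponent m
  set Pc : Polynomial ℂ := P.map (Int.castRingHom ℂ) with hPc
  have hPcm : Pc.Monic := hPm.map _
  have horder : ∀ z ∈ Pc.roots, 0 < orderOf z ∧ z ^ orderOf z = 1 := by
    intro z hzr
    have hz : Pc.IsRoot z := Polynomial.isRoot_of_mem_roots hzr
    obtain ⟨k, hk, hzk⟩ := kronecker_aux P hPm habs' z hz
    have hfin : IsOfFinOrder z := isOfFinOrder_iff_pow_eq_one.2 ⟨k, hk, hzk⟩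
    exact ⟨hfin.orderOf_pos, pow_orderOf_eq_one z⟩
  set m : ℕ := ∏ z ∈ Pc.roots.toFinset, orderOf z with hm
  have hmpos : 0 < m := Finset.prod_pos fun z hzm => (horder z (Multiset.mem_toFinset.1 hzm)).1
  have hzm : ∀ z ∈ Pc.roots, z ^ m = 1 := by
    intro z hzr
    obtain ⟨c, hc⟩ : orderOf z ∣ m := Finset.dvd_prod_of_mem _ (Multiset.mem_toFinset.2 hzr)
    rw [hc, pow_mul, (horder z hzr).2, one_pow]
  -- Pc divides (X^m - 1)^n
  have hsplit : Pc = (Pc.roots.map fun r => X - C r).prod :=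
    (IsAlgClosed.splits Pc).eq_prod_roots_of_monic hPcm
  have hdvd : Pc ∣ ((X : Polynomial ℂ) ^ m - 1) ^ n := by
    have h1 : (Pc.roots.map fun r => X - C r).prod ∣
        (Pc.roots.map fun _ => (X : Polynomial ℂ) ^ m - 1).prod := by
      apply Multiset.prod_dvd_prod_of_dvd
      intro r hr
      exact Polynomial.dvd_iff_isRoot.2 (by simp [Polynomial.IsRoot, hzm r hr])
    have h2 : (Pc.roots.map fun _ => (X : Polynomial ℂ) ^ m - 1).prod
        = ((X : Polynomial ℂ) ^ m - 1) ^ Multiset.card Pc.roots := by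
      simp [Multiset.map_const', Multiset.prod_replicate]
    have h3 : Multiset.card Pc.roots ≤ n := by
      have hc := Pc.card_roots'
      have hdeg : Pc.natDegree = n := by
        rw [hPc, hPm.natDegree_map, hP, A.charpoly_natDegree_eq_dim, Fintype.card_fin]
      omega
    rw [← hsplit] at h1
    calc Pc ∣ ((X : Polynomial ℂ) ^ m - 1) ^ Multiset.card Pc.roots := by rw [← h2]; exact h1
      _ ∣ ((X : Polynomial ℂ) ^ m - 1) ^ n := pow_dvd_pow _ h3
  -- Cayley-Hamilton over ℂ gives (Ac^m - 1)^n = 0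
  set Ac : Matrix (Fin n) (Fin n) ℂ := A.map (Int.cast : ℤ → ℂ) with hAc
  have hCH : (Polynomial.aeval Ac) Pc = 0 := by
    rw [← hcmap]; exact Ac.aeval_self_charpoly
  have hnil : (Ac ^ m - 1) ^ n = 0 := by
    obtain ⟨q, hq⟩ := hdvd
    have h0 : (Polynomial.aeval Ac) (((X : Polynomial ℂ) ^ m - 1) ^ n) = 0 := by
      rw [hq, map_mul, hCH, zero_mul]
    simpa using h0
  -- transfer to ℤ
  set N : Matrix (Fin n) (Fin n) ℤ := A ^ m - 1 with hN
  have hmapN : (Int.castRingHom ℂ).mapMatrix N = Ac ^ m - 1 := by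
    rw [hN, map_sub, map_pow, map_one]
    rfl
  have hNnil : N ^ n = 0 := by
    have hinj : Function.Injective ((Int.castRingHom ℂ).mapMatrix :
        Matrix (Fin n) (Fin n) ℤ →+* Matrix (Fin n) (Fin n) ℂ) := by
      intro M₁ M₂ h
      exact Matrix.map_injective Int.cast_injective h
    apply hinj
    rw [map_pow, hmapN, hnil, map_zero]
  have hNne : N ≠ 0 := by
    intro h0
    apply hinf m hmpos
    apply Units.ext
    show (T : Matrix (Fin n) (Fin n) ℤ) ^ m = 1
    have hAm : A ^ m = 1 := by
      have := sub_eq_zero.mp (hN ▸ h0)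
      simpa using this.symm ▸ this
    rw [← hA]; exact hAm
  obtain ⟨i, hi⟩ : ∃ i, N i ≠ 0 := Function.ne_iff.1 hNne
  obtain ⟨j, hij⟩ : ∃ j, N i j ≠ 0 := Function.ne_iff.1 hi
  -- bad primes divide N i j
  apply Set.Finite.subset (Set.finite_Iic (N i j).natAbs)
  intro p hp
  simp only [Set.mem_setOf_eq] at hp
  obtain ⟨hpp, hpord⟩ := hp
  rw [Set.mem_Iic]
  by_contra hple
  push_neg at hple
  have hndvd : ¬ (p : ℤ) ∣ N i j := by
    intro hd
    have h1 : p ∣ (N i j).natAbs := Int.natCast_dvd_natCast.mp (Int.dvd_natAbs.mpr hd)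
    have := Nat.le_of_dvd (Int.natAbs_pos.mpr hij) h1
    omega
  apply hpord
  -- the mod-p argument
  haveI : Fact p.Prime := ⟨hpp⟩
  haveI : Nonempty (Fin n) := ⟨i⟩
  set f : Matrix (Fin n) (Fin n) ℤ →+* Matrix (Fin n) (Fin n) (ZMod p) :=
    (Int.castRingHom (ZMod p)).mapMatrix with hf
  set B : GL (Fin n) (ZMod p) :=
    Matrix.GeneralLinearGroup.map (Int.castRingHom (ZMod p)) T with hB
  set Nb : Matrix (Fin n) (Fin n) (ZMod p) := f N with hNb
  have hBcoe : (B : Matrix (Fin n) (Fin n) (ZMod p)) = f A := rfl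
  have hBm : ((B ^ m : GL (Fin n) (ZMod p)) : Matrix (Fin n) (Fin n) (ZMod p)) = 1 + Nb := by
    have h1 : ((B ^ m : GL (Fin n) (ZMod p)) : Matrix (Fin n) (Fin n) (ZMod p))
        = ((B : Matrix (Fin n) (Fin n) (ZMod p))) ^ m := Units.val_pow_eq_pow_val B m
    have h2 : A ^ m = 1 + N := by rw [hN]; abel
    rw [h1, hBcoe, ← map_pow, h2, map_add, map_one]
  have hNbnil : Nb ^ n = 0 := by
    rw [hNb, ← map_pow, hNnil, map_zero]
  have hNbne : Nb ≠ 0 := by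
    intro h0
    apply hndvd
    have : Nb i j = 0 := by rw [h0]; rfl
    rw [hNb] at this
    have hcast : ((N i j : ℤ) : ZMod p) = 0 := this
    exact (ZMod.intCast_zmod_eq_zero_iff_dvd _ p).mp hcast
  have hBmne : B ^ m ≠ 1 := by
    intro h1
    apply hNbne
    have : (1 : Matrix (Fin n) (Fin n) (ZMod p)) = 1 + Nb := by rw [← hBm, h1]; rfl
    exact (left_eq_add.mp this)
  have hpow1 : (B ^ m) ^ (p ^ n) = 1 := by
    apply Units.ext
    have h1 : (((B ^ m) ^ (p ^ n) : GL (Fin n) (ZMod p)) : Matrix (Fin n) (Fin n) (ZMod p))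
        = (1 + Nb) ^ (p ^ n) := by
      rw [Units.val_pow_eq_pow_val, hBm]
    rw [h1]
    have h2 : ((1 : Matrix (Fin n) (Fin n) (ZMod p)) + Nb) ^ (p ^ n)
        = 1 ^ (p ^ n) + Nb ^ (p ^ n) := add_pow_char_pow_of_commute p n (Commute.one_left Nb)
    have h3 : Nb ^ (p ^ n) = 0 := by
      have hle : n ≤ p ^ n := (Nat.lt_pow_self (n := n) hpp.one_lt).le
      calc Nb ^ (p ^ n) = Nb ^ n * Nb ^ (p ^ n - n) := by rw [← pow_add]; congr 1; omega
        _ = 0 := by rw [hNbnil, zero_mul]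
    rw [h2, h3, one_pow, add_zero]
    rfl
  have hdvd1 : orderOf (B ^ m) ∣ p ^ n := orderOf_dvd_of_pow_eq_one hpow1
  obtain ⟨j', hj', hordeq⟩ := (Nat.dvd_prime_pow hpp).mp hdvd1
  have hj0 : j' ≠ 0 := by
    intro h
    rw [h, pow_zero] at hordeq
    exact hBmne (orderOf_eq_one_iff.mp hordeq)
  have hpdvd : p ∣ orderOf (B ^ m) := hordeq ▸ dvd_pow_self p hj0
  exact hpdvd.trans (orderOf_pow_dvd m)
end
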